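/- Suppose $n = 1$ and $f \in C(S^1, \mathbb{R})$ satisfies: for every half plane $H$ through the origin and every $x, y \in S^1 \cap H$, $(f(x) - f(Rx))(f(y) - f(Ry)) \ge 0$, where $R$ is the reflection with respect to $\partial H$. Then there exists $p \in S^1$ and an increasing function $\phi: [-1,1] \to \mathbb{R}$ such that $f(x) = \phi(x\cdot p)$ for all $x \in S^1$. -/

import Mathlib

open Metric Set
open scoped RealInnerProductSpace

noncomputable section

namespace Stmt9Aux

open Real

/-- positive set: axes where some strict increase under reflection occurs -/
def Up (g : ℝ → ℝ) : Set ℝ := {β | ∃ θ, β - π < θ ∧ θ < β ∧ 0 < g θ - g (2*β - θ)}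

/-- negative set -/
def Um (g : ℝ → ℝ) : Set ℝ := {β | ∃ θ, β - π < θ ∧ θ < β ∧ g θ - g (2*β - θ) < 0}

variable {g : ℝ → ℝ}

/-- sign hypothesis -/
def SignHyp (g : ℝ → ℝ) : Prop :=
  ∀ β θ₁ θ₂, β - π ≤ θ₁ → θ₁ ≤ β → β - π ≤ θ₂ → θ₂ ≤ β →
    0 ≤ (g θ₁ - g (2*β - θ₁)) * (g θ₂ - g (2*β - θ₂))

lemma hperZ (hper : ∀ θ, g (θ + 2*π) = g θ) (θ : ℝ) (k : ℤ) : g (θ + k * (2*π)) = g θ := by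
  have hp : Function.Periodic g (2*π) := hper
  have := (hp.zsmul k) θ
  simpa [zsmul_eq_mul] using this

lemma not_mem_Up_Um (hP : SignHyp g) {β : ℝ} (h1 : β ∈ Up g) (h2 : β ∈ Um g) : False := by
  obtain ⟨θ₁, ha1, hb1, hc1⟩ := h1
  obtain ⟨θ₂, ha2, hb2, hc2⟩ := h2
  have := hP β θ₁ θ₂ ha1.le hb1.le ha2.le hb2.le
  nlinarith

lemma isOpen_Up (hg : Continuous g) : IsOpen (Up g) := by
  have : Up g = ⋃ θ : ℝ, ({β | θ < β} ∩ {β | β < θ + π} ∩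
      (fun β => g θ - g (2*β - θ)) ⁻¹' Ioi 0) := by
    ext β
    simp only [Up, mem_setOf_eq, mem_iUnion, mem_inter_iff, mem_preimage, mem_Ioi]
    constructor
    · rintro ⟨θ, h1, h2, h3⟩; exact ⟨θ, ⟨h2, by linarith⟩, h3⟩
    · rintro ⟨θ, ⟨h2, h1⟩, h3⟩; exact ⟨θ, by linarith, h2, h3⟩
  rw [this]
  refine isOpen_iUnion fun θ => ((isOpen_lt continuous_const continuous_id).inter
    (isOpen_lt continuous_id continuous_const)).inter (IsOpen.preimage ?_ isOpen_Ioi)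
  exact continuous_const.sub (hg.comp (by continuity))

lemma isOpen_Um (hg : Continuous g) : IsOpen (Um g) := by
  have : Um g = ⋃ θ : ℝ, ({β | θ < β} ∩ {β | β < θ + π} ∩
      (fun β => g θ - g (2*β - θ)) ⁻¹' Iio 0) := by
    ext β
    simp only [Um, mem_setOf_eq, mem_iUnion, mem_inter_iff, mem_preimage, mem_Iio]
    constructor
    · rintro ⟨θ, h1, h2, h3⟩; exact ⟨θ, ⟨h2, by linarith⟩, h3⟩
    · rintro ⟨θ, ⟨h2, h1⟩, h3⟩; exact ⟨θ, by linarith, h2, h3⟩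
  rw [this]
  refine isOpen_iUnion fun θ => ((isOpen_lt continuous_const continuous_id).inter
    (isOpen_lt continuous_id continuous_const)).inter (IsOpen.preimage ?_ isOpen_Iio)
  exact continuous_const.sub (hg.comp (by continuity))

lemma Up_shift (hper : ∀ θ, g (θ + 2*π) = g θ) {β : ℝ} (h : β ∈ Up g) : β + π ∈ Um g := by
  obtain ⟨θ, h1, h2, h3⟩ := h
  refine ⟨2*β - θ, by linarith, by linarith, ?_⟩
  have : g (2*(β+π) - (2*β - θ)) = g θ := by
    have := hper θ; rw [← this]; ring_nf
  rw [this]; linarith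

lemma Um_shift (hper : ∀ θ, g (θ + 2*π) = g θ) {β : ℝ} (h : β ∈ Um g) : β + π ∈ Up g := by
  obtain ⟨θ, h1, h2, h3⟩ := h
  refine ⟨2*β - θ, by linarith, by linarith, ?_⟩
  have : g (2*(β+π) - (2*β - θ)) = g θ := by
    have := hper θ; rw [← this]; ring_nf
  rw [this]; linarith

/-- If an axis is in neither Up nor Um, then g is symmetric about it (everywhere). -/
lemma sym_of_mem_Z (hper : ∀ θ, g (θ + 2*π) = g θ)
    {c : ℝ} (h1 : c ∉ Up g) (h2 : c ∉ Um g) : ∀ θ, g θ = g (2*c - θ) := by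
  have hbase : ∀ θ, c - π < θ → θ < c → g θ = g (2*c - θ) := by
    intro θ hθ1 hθ2
    by_contra hne
    rcases lt_or_gt_of_ne hne with hlt | hgt
    · exact h2 ⟨θ, hθ1, hθ2, by linarith⟩
    · exact h1 ⟨θ, hθ1, hθ2, by linarith⟩
  have hIcc : ∀ θ, c - π ≤ θ → θ ≤ c + π → g θ = g (2*c - θ) := by
    intro θ hθ1 hθ2
    rcases lt_trichotomy θ c with hlt | heq | hgt
    · rcases eq_or_lt_of_le hθ1 with h | h
      · -- θ = c - π
        have : g (2*c - θ) = g θ := by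
          rw [← h]; have := hper (c - π); rw [← this]; ring_nf
        exact this.symm
      · exact hbase θ h hlt
    · rw [heq]; ring_nf
    · -- use symmetry of the relation
      have h1' : c - π ≤ 2*c - θ := by linarith
      have h2' : 2*c - θ < c := by linarith
      rcases eq_or_lt_of_le h1' with h | h
      · have : g θ = g (2*c - θ) := by
          have hθeq : θ = (c - π) + 2*π := by linarith
          rw [hθeq, hper (c - π)]
          congr 1; linarith
        exact this
      · have := hbase (2*c - θ) h h2'
        have h2'' : 2*c - (2*c - θ) = θ := by ring
        rw [h2''] at this
        exact this.symm
  intro θ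
  -- reduce θ mod 2π into [c - π, c + π)
  have h2π : (0:ℝ) < 2*π := by positivity
  set θ' := toIcoMod h2π (c - π) θ with hθ'
  have hmem := toIcoMod_mem_Ico h2π (c - π) θ
  have hsub : θ - θ' = toIcoDiv h2π (c - π) θ • (2*π) := self_sub_toIcoMod h2π (c - π) θ
  set k := toIcoDiv h2π (c - π) θ with hk
  have hθeq : θ = θ' + k * (2*π) := by
    have : θ - θ' = (k:ℝ) * (2*π) := by rw [hsub]; simp [zsmul_eq_mul]
    linarith
  have hg1 : g θ = g θ' := by rw [hθeq]; exact hperZ hper θ' k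
  have hg2 : g (2*c - θ) = g (2*c - θ') := by
    have : 2*c - θ' = (2*c - θ) + k * (2*π) := by rw [hθeq]; ring
    rw [this] at *
    exact (hperZ hper (2*c - θ) k).symm
  rw [hg1, hg2]
  exact hIcc θ' hmem.1 (by have := hmem.2; simp only [mem_Ico] at hmem; linarith [hmem.2])

/-- g even and 2π-periodic implies g θ = g (arccos (cos θ)). -/
lemma even_per_eq_arccos (hper : ∀ θ, g (θ + 2*π) = g θ) (heven : ∀ θ, g (-θ) = g θ)
    (θ : ℝ) : g θ = g (arccos (cos θ)) := by
  have h2π : (0:ℝ) < 2*π := by positivity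
  set θ' := toIcoMod h2π (-π) θ with hθ'
  have hmem := toIcoMod_mem_Ico h2π (-π) θ
  have hsub : θ - θ' = toIcoDiv h2π (-π) θ • (2*π) := self_sub_toIcoMod h2π (-π) θ
  set k := toIcoDiv h2π (-π) θ with hk
  have hθeq : θ = θ' + k * (2*π) := by
    have : θ - θ' = (k:ℝ) * (2*π) := by rw [hsub]; simp [zsmul_eq_mul]
    linarith
  have hg1 : g θ = g θ' := by rw [hθeq]; exact hperZ hper θ' k
  have hcos : cos θ = cos θ' := by rw [hθeq]; exact cos_add_int_mul_two_pi θ' k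
  have hmem1 : -π ≤ θ' := hmem.1
  have hmem2 : θ' < π := by have := hmem.2; simp only [mem_Ico] at hmem; linarith [hmem.2]
  rw [hg1, hcos]
  rcases le_or_gt 0 θ' with hpos | hneg
  · rw [arccos_cos hpos hmem2.le]
  · have : cos θ' = cos (-θ') := (cos_neg θ').symm
    rw [this, arccos_cos (by linarith) (by linarith)]
    exact (heven θ').symm

/-- Main lemma assuming g even. -/
lemma key0 (hg : Continuous g) (hper : ∀ θ, g (θ + 2*π) = g θ)
    (heven : ∀ θ, g (-θ) = g θ) (hP : SignHyp g) :
    ∃ φ : ℝ → ℝ, MonotoneOn φ (Icc (-1:ℝ) 1) ∧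
      ((∀ θ, g θ = φ (cos θ)) ∨ (∀ θ, g θ = φ (-cos θ))) := by
  by_cases hZ : ∃ β, 0 < β ∧ β < π ∧ β ∉ Up g ∧ β ∉ Um g
  · -- g is constant
    obtain ⟨β, hβ0, hβπ, hU, hM⟩ := hZ
    have hsym := sym_of_mem_Z hper hU hM
    have hperβ : ∀ θ, g (θ + 2*β) = g θ := by
      intro θ
      have h1 : g (θ + 2*β) = g (2*β - (-(θ))) := by ring_nf
      rw [h1, ← hsym (-θ), heven]
    -- define period T ≤ π
    obtain ⟨T, hT0, hTπ, hTper⟩ : ∃ T, 0 < T ∧ T ≤ π ∧ ∀ θ, g (θ + T) = g θ := by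
      rcases le_or_gt β (π/2) with hle | hgt
      · exact ⟨2*β, by linarith, by linarith, hperβ⟩
      · refine ⟨2*(π - β), by linarith, by linarith, fun θ => ?_⟩
        have h1 : θ + 2*(π - β) = (θ - 2*β) + 2*π := by ring
        rw [h1, hper, ← hperβ (θ - 2*β)]
        ring_nf
    have hTZ : ∀ θ (k : ℤ), g (θ + k * T) = g θ := by
      intro θ k
      have hp : Function.Periodic g T := hTper
      have := (hp.zsmul k) θ
      simpa [zsmul_eq_mul] using this
    -- show g is constant
    have hconst : ∀ s, g s = g 0 := by
      have hDzero : ∀ β' θ, g θ = g (2*β' - θ) := by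
        intro β' θ
        set θ₁ := toIcoMod hT0 (β' - π) θ with hθ₁
        have hmem1 := toIcoMod_mem_Ico hT0 (β' - π) θ
        have hsub1 : θ - θ₁ = toIcoDiv hT0 (β' - π) θ • T := self_sub_toIcoMod hT0 (β' - π) θ
        set k₁ := toIcoDiv hT0 (β' - π) θ with hk₁
        have hθeq1 : θ = θ₁ + k₁ * T := by
          have : θ - θ₁ = (k₁:ℝ) * T := by rw [hsub1]; simp [zsmul_eq_mul]
          linarith
        have hg1 : g θ = g θ₁ := by rw [hθeq1]; exact hTZ θ₁ k₁
        have hg1' : g (2*β' - θ) = g (2*β' - θ₁) := by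
          have h : 2*β' - θ₁ = (2*β' - θ) + k₁ * T := by rw [hθeq1]; ring
          rw [h]; exact (hTZ (2*β' - θ) k₁).symm
        set θ₂ := toIcoMod hT0 (β' - π) (2*β' - θ₁) with hθ₂
        have hmem2 := toIcoMod_mem_Ico hT0 (β' - π) (2*β' - θ₁)
        have hsub2 : (2*β' - θ₁) - θ₂ = toIcoDiv hT0 (β' - π) (2*β' - θ₁) • T :=
          self_sub_toIcoMod hT0 (β' - π) (2*β' - θ₁)
        set k₂ := toIcoDiv hT0 (β' - π) (2*β' - θ₁) with hk₂
        have hθeq2 : 2*β' - θ₁ = θ₂ + k₂ * T := by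
          have : (2*β' - θ₁) - θ₂ = (k₂:ℝ) * T := by rw [hsub2]; simp [zsmul_eq_mul]
          linarith
        have hg2 : g (2*β' - θ₁) = g θ₂ := by rw [hθeq2]; exact hTZ θ₂ k₂
        have hg2' : g (2*β' - θ₂) = g θ₁ := by
          have h : 2*β' - θ₂ = θ₁ + k₂ * T := by linarith [hθeq2]
          rw [h]; exact hTZ θ₁ k₂
        -- apply hypothesis to θ₁ θ₂
        have hb1 : β' - π ≤ θ₁ := hmem1.1
        have hb1' : θ₁ ≤ β' := by
          have := hmem1.2; simp only [mem_Ico] at hmem1; linarith [hmem1.2]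
        have hb2 : β' - π ≤ θ₂ := hmem2.1
        have hb2' : θ₂ ≤ β' := by
          have := hmem2.2; simp only [mem_Ico] at hmem2; linarith [hmem2.2]
        have hprod := hP β' θ₁ θ₂ hb1 hb1' hb2 hb2'
        have he1 : g θ₂ - g (2*β' - θ₂) = -(g θ₁ - g (2*β' - θ₁)) := by
          rw [hg2', ← hg2]; ring
        rw [he1] at hprod
        have hz : g θ₁ - g (2*β' - θ₁) = 0 := by nlinarith
        rw [hg1, hg1']; linarith
      intro s
      have := hDzero (s/2) 0
      have h : 2*(s/2) - 0 = s := by ring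
      rw [h] at this
      exact this.symm
    exact ⟨fun _ => g 0, fun a _ b _ _ => le_refl _, Or.inl fun θ => hconst θ⟩
  · push_neg at hZ
    have hcover : ∀ β ∈ Ioo (0:ℝ) π, β ∈ Up g ∪ Um g := by
      intro β hβ
      by_cases h : β ∈ Up g
      · exact Or.inl h
      · exact Or.inr (hZ β hβ.1 hβ.2 h)
    -- Ioo 0 π is in one of the two
    have hd : Disjoint (Up g) (Um g) := by
      rw [Set.disjoint_iff]
      rintro β ⟨h1, h2⟩
      exact absurd (not_mem_Up_Um hP h1 h2) (by simp)
    have honeside : (Ioo (0:ℝ) π ⊆ Up g) ∨ (Ioo (0:ℝ) π ⊆ Um g) := by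
      by_cases hup : (Ioo (0:ℝ) π ∩ Um g).Nonempty
      · by_cases hum : (Ioo (0:ℝ) π ∩ Up g).Nonempty
        · exfalso
          obtain ⟨β, hβ1, hβ2⟩ := (isPreconnected_Ioo (a := (0:ℝ)) (b := π))
            (Up g) (Um g) (isOpen_Up hg) (isOpen_Um hg) hcover hum hup
          exact not_mem_Up_Um hP hβ2.1 hβ2.2
        · right
          intro β hβ
          rcases hcover β hβ with h | h
          · exact absurd ⟨β, hβ, h⟩ hum
          · exact h
      · left
        intro β hβ
        rcases hcover β hβ with h | h
        · exact h
        · exact absurd ⟨β, hβ, h⟩ hup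
    rcases honeside with hplus | hminus
    · -- g antitone on [0, π]
      have hanti : ∀ a b, 0 ≤ a → a < b → b ≤ π → g b ≤ g a := by
        intro a b ha hab hb
        set β := (a + b)/2 with hβ
        have hβIoo : β ∈ Ioo (0:ℝ) π := ⟨by simp [hβ]; linarith, by simp [hβ]; linarith [pi_pos]⟩
        have hnotUm : β ∉ Um g := fun hm => (Set.disjoint_left.mp hd (hplus hβIoo)) hm
        by_contra hlt
        push_neg at hlt
        refine hnotUm ⟨a, ?_, ?_, ?_⟩
        · simp only [hβ]; nlinarith [pi_pos]
        · simp only [hβ]; linarith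
        · have : 2*β - a = b := by simp [hβ]; ring
          rw [this]; linarith
      refine ⟨fun t => g (arccos t), ?_, Or.inl ?_⟩
      · intro t₁ ht₁ t₂ ht₂ hle
        rcases eq_or_lt_of_le hle with heq | hlt
        · rw [heq]
        · have harc : arccos t₂ ≤ arccos t₁ := by
            have := Real.monotone_arcsin hle
            simp only [Real.arccos]; linarith
          rcases eq_or_lt_of_le harc with heq | hlt2
          · simp only [heq]; exact le_refl _
          · exact hanti (arccos t₂) (arccos t₁) (arccos_nonneg _) hlt2 (arccos_le_pi _)
      · exact fun θ => even_per_eq_arccos hper heven θ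
    · -- g monotone on [0, π]
      have hmono : ∀ a b, 0 ≤ a → a < b → b ≤ π → g a ≤ g b := by
        intro a b ha hab hb
        set β := (a + b)/2 with hβ
        have hβIoo : β ∈ Ioo (0:ℝ) π := ⟨by simp [hβ]; linarith, by simp [hβ]; linarith [pi_pos]⟩
        have hnotUp : β ∉ Up g := fun hm => (Set.disjoint_left.mp hd hm) (hminus hβIoo)
        by_contra hlt
        push_neg at hlt
        refine hnotUp ⟨a, ?_, ?_, ?_⟩
        · simp only [hβ]; nlinarith [pi_pos]
        · simp only [hβ]; linarith
        · have : 2*β - a = b := by simp [hβ]; ring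
          rw [this]; linarith
      refine ⟨fun t => g (π - arccos t), ?_, Or.inr ?_⟩
      · intro t₁ ht₁ t₂ ht₂ hle
        rcases eq_or_lt_of_le hle with heq | hlt
        · rw [heq]
        · have harc : arccos t₂ ≤ arccos t₁ := by
            have := Real.monotone_arcsin hle
            simp only [Real.arccos]; linarith
          rcases eq_or_lt_of_le harc with heq | hlt2
          · simp only [heq]; exact le_refl _
          · exact hmono (π - arccos t₁) (π - arccos t₂) (by linarith [arccos_le_pi t₁])
              (by linarith) (by linarith [arccos_nonneg t₂])
      · intro θ
        have h1 : arccos (-cos θ) = π - arccos (cos θ) := arccos_neg (cos θ)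
        have h2 : π - arccos (-cos θ) = arccos (cos θ) := by rw [h1]; ring
        show g θ = g (π - arccos (-cos θ))
        rw [h2]
        exact even_per_eq_arccos hper heven θ

/-- Main abstract lemma. -/
lemma key (hg : Continuous g) (hper : ∀ θ, g (θ + 2*π) = g θ) (hP : SignHyp g) :
    ∃ c : ℝ, ∃ φ : ℝ → ℝ, MonotoneOn φ (Icc (-1:ℝ) 1) ∧ ∀ θ, g θ = φ (cos (θ - c)) := by
  by_cases hconst : ∀ θ, g θ = g 0
  · exact ⟨0, fun _ => g 0, fun a _ b _ _ => le_refl _, fun θ => hconst θ⟩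
  · push_neg at hconst
    obtain ⟨θ₀, hθ₀⟩ := hconst
    -- Up is nonempty
    have hne : (Up g).Nonempty := by
      have key2 : ∀ θ₁ θ₂ : ℝ, g θ₂ < g θ₁ → (Up g).Nonempty := by
        intro θ₁ θ₂ hlt
        have h2π : (0:ℝ) < 2*π := by positivity
        set θ₂' := toIocMod h2π θ₁ θ₂ with hθ₂'
        have hmem := toIocMod_mem_Ioc h2π θ₁ θ₂
        have hsub : θ₂ - θ₂' = toIocDiv h2π θ₁ θ₂ • (2*π) := self_sub_toIocMod h2π θ₁ θ₂
        set k := toIocDiv h2π θ₁ θ₂ with hk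
        have hθeq : θ₂ = θ₂' + k * (2*π) := by
          have : θ₂ - θ₂' = (k:ℝ) * (2*π) := by rw [hsub]; simp [zsmul_eq_mul]
          linarith
        have hg2 : g θ₂ = g θ₂' := by rw [hθeq]; exact hperZ hper θ₂' k
        have hlt' : θ₂' < θ₁ + 2*π := by
          rcases lt_or_eq_of_le hmem.2 with h | h
          · exact h
          · exfalso
            have : g θ₂' = g θ₁ := by rw [hθ₂', h]; exact hper θ₁
            rw [hg2, this] at hlt
            exact lt_irrefl _ hlt
        refine ⟨(θ₁ + θ₂')/2, θ₁, by linarith [hmem.1], by linarith [hmem.1], ?_⟩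
        have : 2*((θ₁ + θ₂')/2) - θ₁ = θ₂' := by ring
        rw [this, ← hg2]; linarith
      rcases lt_or_gt_of_ne hθ₀ with h | h
      · exact key2 0 θ₀ h
      · exact key2 θ₀ 0 h
    have hne' : (Um g).Nonempty := by
      obtain ⟨β, hβ⟩ := hne
      exact ⟨β + π, Up_shift hper hβ⟩
    -- Z is nonempty by connectedness
    have hZne : ∃ c, c ∉ Up g ∧ c ∉ Um g := by
      by_contra hc
      push_neg at hc
      have hcover : (univ : Set ℝ) ⊆ Up g ∪ Um g := by
        intro β _
        by_cases h : β ∈ Up g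
        · exact Or.inl h
        · exact Or.inr (hc β h)
      obtain ⟨β, _, hβ2⟩ := isPreconnected_univ (Up g) (Um g) (isOpen_Up hg) (isOpen_Um hg)
        hcover ⟨hne.choose, mem_univ _, hne.choose_spec⟩ ⟨hne'.choose, mem_univ _, hne'.choose_spec⟩
      exact not_mem_Up_Um hP hβ2.1 hβ2.2
    obtain ⟨c, hc1, hc2⟩ := hZne
    have hsym := sym_of_mem_Z hper hc1 hc2
    -- translated function
    set g' : ℝ → ℝ := fun θ => g (θ + c) with hg'
    have hg'c : Continuous g' := hg.comp (continuous_id.add continuous_const)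
    have hper' : ∀ θ, g' (θ + 2*π) = g' θ := by
      intro θ; simp only [hg']
      have : θ + 2*π + c = (θ + c) + 2*π := by ring
      rw [this, hper]
    have heven' : ∀ θ, g' (-θ) = g' θ := by
      intro θ; simp only [hg']
      have h1 : g (θ + c) = g (2*c - (θ + c)) := hsym (θ + c)
      have h2 : 2*c - (θ + c) = -θ + c := by ring
      rw [h1, h2]
    have hP' : SignHyp g' := by
      intro β θ₁ θ₂ h1 h2 h3 h4
      have := hP (β + c) (θ₁ + c) (θ₂ + c) (by linarith) (by linarith) (by linarith) (by linarith)
      simp only [hg']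
      have e1 : 2*(β + c) - (θ₁ + c) = 2*β - θ₁ + c := by ring
      have e2 : 2*(β + c) - (θ₂ + c) = 2*β - θ₂ + c := by ring
      rw [e1, e2] at this
      exact this
    obtain ⟨φ, hmono, hbranch⟩ := key0 hg'c hper' heven' hP'
    rcases hbranch with hL | hR
    · refine ⟨c, φ, hmono, fun θ => ?_⟩
      have := hL (θ - c)
      simp only [hg'] at this
      rw [sub_add_cancel] at this
      exact this
    · refine ⟨c + π, φ, hmono, fun θ => ?_⟩
      have := hR (θ - c)
      simp only [hg'] at this
      rw [sub_add_cancel] at this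
      have hcos : cos (θ - (c + π)) = -cos (θ - c) := by
        have : θ - (c + π) = (θ - c) - π := by ring
        rw [this, cos_sub_pi]
      rw [hcos]
      exact this


/-! Geometric part -/

/-- The circle parametrization. -/
def e (θ : ℝ) : EuclideanSpace ℝ (Fin 2) :=
  (WithLp.equiv 2 (Fin 2 → ℝ)).symm ![Real.cos θ, Real.sin θ]

lemma e_apply0 (θ : ℝ) : e θ 0 = cos θ := by
  simp [e]

lemma e_apply1 (θ : ℝ) : e θ 1 = sin θ := by
  simp [e]

lemma e_mem (θ : ℝ) : e θ ∈ sphere (0 : EuclideanSpace ℝ (Fin 2)) 1 := by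
  rw [mem_sphere_zero_iff_norm, EuclideanSpace.norm_eq, Fin.sum_univ_two, e_apply0, e_apply1]
  rw [Real.norm_eq_abs, Real.norm_eq_abs, sq_abs, sq_abs]
  rw [show cos θ ^ 2 + sin θ ^ 2 = 1 by rw [add_comm]; exact sin_sq_add_cos_sq θ]
  exact Real.sqrt_one

lemma e_inner (θ α : ℝ) : ⟪e θ, e α⟫ = cos (θ - α) := by
  have : ⟪e θ, e α⟫ = (e θ 0) * (e α 0) + (e θ 1) * (e α 1) := by
    simp [PiLp.inner_apply, RCLike.inner_apply, Fin.sum_univ_two]; ring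
  rw [this, e_apply0, e_apply1, e_apply0, e_apply1, Real.cos_sub]

lemma e_continuous : Continuous e := by
  apply (PiLp.continuous_toLp 2 (fun _ : Fin 2 => ℝ)).comp
  apply continuous_pi
  intro i
  fin_cases i
  · simpa using Real.continuous_cos
  · simpa using Real.continuous_sin

lemma e_reflect (θ α : ℝ) :
    e θ - (2 * ⟪e θ, e α⟫) • e α = e (2*α + π - θ) := by
  rw [e_inner]
  ext i
  fin_cases i
  · show (e θ - (2 * cos (θ - α)) • e α) 0 = e (2*α + π - θ) 0
    have h : (e θ - (2 * cos (θ - α)) • e α) 0 = e θ 0 - (2 * cos (θ - α)) * e α 0 := by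
      simp
    rw [h, e_apply0, e_apply0, e_apply0]
    rw [Real.cos_sub]
    rw [show 2*α + π - θ = (α + (α - θ)) + π by ring]
    rw [Real.cos_add_pi, Real.cos_add, Real.cos_sub, Real.sin_sub]
    have := sin_sq_add_cos_sq α
    linear_combination (-(cos θ)) * this
  · show (e θ - (2 * cos (θ - α)) • e α) 1 = e (2*α + π - θ) 1
    have h : (e θ - (2 * cos (θ - α)) • e α) 1 = e θ 1 - (2 * cos (θ - α)) * e α 1 := by
      simp
    rw [h, e_apply1, e_apply1, e_apply1]
    rw [Real.cos_sub]
    rw [show 2*α + π - θ = (α + (α - θ)) + π by ring]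
    rw [Real.sin_add_pi, Real.sin_add, Real.cos_sub, Real.sin_sub]
    have := sin_sq_add_cos_sq α
    linear_combination (-(sin θ)) * this

lemma e_surj (x : EuclideanSpace ℝ (Fin 2)) (hx : x ∈ sphere (0 : EuclideanSpace ℝ (Fin 2)) 1) :
    ∃ θ, e θ = x := by
  rw [mem_sphere_zero_iff_norm, EuclideanSpace.norm_eq, Fin.sum_univ_two] at hx
  have hsq : x 0 ^ 2 + x 1 ^ 2 = 1 := by
    have h1 : √(‖x 0‖ ^ 2 + ‖x 1‖ ^ 2) = 1 := hx
    have h2 : (0:ℝ) ≤ ‖x 0‖ ^ 2 + ‖x 1‖ ^ 2 := by positivity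
    have := Real.sqrt_eq_one.mp h1
    rw [Real.norm_eq_abs, Real.norm_eq_abs, sq_abs, sq_abs] at this
    exact this
  set z : ℂ := ⟨x 0, x 1⟩ with hz
  have habs : ‖z‖ = 1 := by
    rw [Complex.norm_def, Complex.normSq_apply]
    simp only [hz]
    rw [show x 0 * x 0 + x 1 * x 1 = 1 by nlinarith]
    exact Real.sqrt_one
  have hne : z ≠ 0 := by
    intro h; rw [h] at habs; simp at habs
  refine ⟨Complex.arg z, ?_⟩
  have hcos : cos (Complex.arg z) = x 0 := by
    rw [Complex.cos_arg hne, habs]; simp [hz]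
  have hsin : sin (Complex.arg z) = x 1 := by
    rw [Complex.sin_arg, habs]; simp [hz]
  ext i
  fin_cases i
  · show e (Complex.arg z) 0 = x 0
    rw [e_apply0, hcos]
  · show e (Complex.arg z) 1 = x 1
    rw [e_apply1, hsin]

end Stmt9Aux

/-- The `n = 1` case: if `f ∈ C(S¹)` satisfies, for every half plane `H = {x : x·u ≥ 0}`
through the origin and all `x, y ∈ S¹ ∩ H`, `(f(x) - f(Rx))(f(y) - f(Ry)) ≥ 0` where `R`
is the reflection in the line `∂H`, then there are `p ∈ S¹` and an increasing
`φ : [-1,1] → ℝ` with `f(x) = φ(x·p)` on `S¹`. -/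
theorem stmt_9 (f : EuclideanSpace ℝ (Fin 2) → ℝ)
    (hf : ContinuousOn f (sphere (0 : EuclideanSpace ℝ (Fin 2)) 1))
    (h : ∀ u : EuclideanSpace ℝ (Fin 2), ‖u‖ = 1 →
      ∀ x ∈ sphere (0 : EuclideanSpace ℝ (Fin 2)) 1,
      ∀ y ∈ sphere (0 : EuclideanSpace ℝ (Fin 2)) 1,
        0 ≤ ⟪x, u⟫ → 0 ≤ ⟪y, u⟫ →
        0 ≤ (f x - f (x - (2 * ⟪x, u⟫) • u)) * (f y - f (y - (2 * ⟪y, u⟫) • u))) :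
    ∃ p ∈ sphere (0 : EuclideanSpace ℝ (Fin 2)) 1,
      ∃ φ : ℝ → ℝ, MonotoneOn φ (Icc (-1 : ℝ) 1) ∧
        ∀ x ∈ sphere (0 : EuclideanSpace ℝ (Fin 2)) 1, f x = φ ⟪x, p⟫ := by
  classical
  set g : ℝ → ℝ := fun θ => f (Stmt9Aux.e θ) with hgdef
  have hgc : Continuous g := hf.comp_continuous Stmt9Aux.e_continuous Stmt9Aux.e_mem
  have hper : ∀ θ, g (θ + 2*Real.pi) = g θ := by
    intro θ
    simp only [hgdef]
    congr 1
    ext i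
    fin_cases i
    · show Stmt9Aux.e (θ + 2*Real.pi) 0 = Stmt9Aux.e θ 0
      rw [Stmt9Aux.e_apply0, Stmt9Aux.e_apply0, Real.cos_add_two_pi]
    · show Stmt9Aux.e (θ + 2*Real.pi) 1 = Stmt9Aux.e θ 1
      rw [Stmt9Aux.e_apply1, Stmt9Aux.e_apply1, Real.sin_add_two_pi]
  have hP : Stmt9Aux.SignHyp g := by
    intro β θ₁ θ₂ h1 h2 h3 h4
    set α := β - Real.pi/2 with hα
    have hu : ‖Stmt9Aux.e α‖ = 1 := mem_sphere_zero_iff_norm.mp (Stmt9Aux.e_mem α)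
    have hc1 : 0 ≤ ⟪Stmt9Aux.e θ₁, Stmt9Aux.e α⟫ := by
      rw [Stmt9Aux.e_inner]
      have he : θ₁ - α = (θ₁ - β) + Real.pi/2 := by rw [hα]; ring
      rw [he, Real.cos_add_pi_div_two]
      have hs : 0 ≤ Real.sin (β - θ₁) :=
        Real.sin_nonneg_of_nonneg_of_le_pi (by linarith) (by linarith)
      rw [show θ₁ - β = -(β - θ₁) by ring, Real.sin_neg]
      linarith
    have hc2 : 0 ≤ ⟪Stmt9Aux.e θ₂, Stmt9Aux.e α⟫ := by
      rw [Stmt9Aux.e_inner]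
      have he : θ₂ - α = (θ₂ - β) + Real.pi/2 := by rw [hα]; ring
      rw [he, Real.cos_add_pi_div_two]
      have hs : 0 ≤ Real.sin (β - θ₂) :=
        Real.sin_nonneg_of_nonneg_of_le_pi (by linarith) (by linarith)
      rw [show θ₂ - β = -(β - θ₂) by ring, Real.sin_neg]
      linarith
    have hmain := h (Stmt9Aux.e α) hu (Stmt9Aux.e θ₁) (Stmt9Aux.e_mem θ₁)
      (Stmt9Aux.e θ₂) (Stmt9Aux.e_mem θ₂) hc1 hc2
    rw [Stmt9Aux.e_reflect θ₁ α, Stmt9Aux.e_reflect θ₂ α] at hmain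
    have e1 : 2*α + Real.pi - θ₁ = 2*β - θ₁ := by rw [hα]; ring
    have e2 : 2*α + Real.pi - θ₂ = 2*β - θ₂ := by rw [hα]; ring
    rw [e1, e2] at hmain
    exact hmain
  obtain ⟨c, φ, hmono, hrep⟩ := Stmt9Aux.key hgc hper hP
  refine ⟨Stmt9Aux.e c, Stmt9Aux.e_mem c, φ, hmono, ?_⟩
  intro x hx
  obtain ⟨θ, rfl⟩ := Stmt9Aux.e_surj x hx
  rw [Stmt9Aux.e_inner]
  exact hrep θ

end
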